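/- For every integer k ≥ 1, every weak order W extending the interval order I_k satisfies H(W) − H(I_k) ≥ log₂ k − log₂ e − 1, where e is the base of natural logarithms. -/

import Mathlib

/-- A stable (independent) set of a simple graph, as a `Finset` of vertices. -/
def IsStableSet {V : Type*} (G : SimpleGraph V) (S : Finset V) : Prop :=
  ∀ v ∈ S, ∀ w ∈ S, ¬ G.Adj v w

/-- The stable set polytope `STAB(G)`: the convex hull of characteristic vectors
of stable sets of `G`. -/
noncomputable def STAB {V : Type*} [Fintype V] [DecidableEq V] (G : SimpleGraph V) :
    Set (V → ℝ) :=
  convexHull ℝ {x | ∃ S : Finset V, IsStableSet G S ∧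
    x = fun v => if v ∈ S then (1 : ℝ) else 0}

/-- The (Körner) entropy of a graph `G` on `n` vertices:
`H(G) = min_{x ∈ STAB(G), x > 0} -(1/n) ∑_v log₂ x_v`. -/
noncomputable def graphEntropy {V : Type*} [Fintype V] [DecidableEq V]
    (G : SimpleGraph V) : ℝ :=
  sInf {h : ℝ | ∃ x ∈ STAB G, (∀ v, 0 < x v) ∧
    h = -(1 / (Fintype.card V : ℝ)) * ∑ v, Real.logb 2 (x v)}

/-- The comparability graph of a partial order `P`: distinct `v, w` are adjacent
iff they are comparable in `P`. -/
def compGraph {V : Type*} (P : PartialOrder V) : SimpleGraph V where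
  Adj v w := v ≠ w ∧ (P.le v w ∨ P.le w v)
  symm := ⟨fun v w h => ⟨h.1.symm, h.2.symm⟩⟩
  loopless := ⟨fun v h => h.1 rfl⟩

/-- The entropy of a poset: the entropy of its comparability graph. -/
noncomputable def posetEntropy {V : Type*} [Fintype V] [DecidableEq V]
    (P : PartialOrder V) : ℝ :=
  graphEntropy (compGraph P)

/-- The number `e(P)` of linear extensions of a finite poset `P`, counted as
order-preserving bijections onto `Fin n`. -/
noncomputable def numLinExt {V : Type*} [Fintype V] (P : PartialOrder V) : ℕ :=
  Nat.card {f : V ≃ Fin (Fintype.card V) // ∀ v w : V, P.le v w → f v ≤ f w}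

/-- `W` is a weak order: its ground set is partitioned into layers
`A 0, …, A (k-1)` (necessarily antichains), and `v <_W w` holds exactly when
`v` lies in an earlier layer than `w`. -/
def IsWeakOrder {V : Type*} (W : PartialOrder V) : Prop :=
  ∃ (k : ℕ) (A : Fin k → Finset V),
    (∀ v : V, ∃! i, v ∈ A i) ∧
    (∀ v w : V, W.lt v w ↔ ∃ i j : Fin k, i < j ∧ v ∈ A i ∧ w ∈ A j)

/-- `Q` extends `P`: same ground set, and every relation of `P` holds in `Q`. -/
def Extends {V : Type*} (Q P : PartialOrder V) : Prop :=
  ∀ v w : V, P.le v w → Q.le v w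


/-- The ground set of the interval order `I_{k+1}`: it has `(k+1)·2^k` elements,
and `IkType (k+1)` is built as `L ⊕ A_L ⊕ A_R ⊕ R` where `L, R` are copies of
`IkType k` and `A_L, A_R` are the two halves of the central antichain. -/
def IkType : ℕ → Type
  | 0 => PUnit
  | k + 1 => IkType k ⊕ Fin (2 ^ k) ⊕ Fin (2 ^ k) ⊕ IkType k

instance ikDecEq : ∀ k, DecidableEq (IkType k)
  | 0 => inferInstanceAs (DecidableEq PUnit)
  | k + 1 =>
    letI := ikDecEq k
    inferInstanceAs (DecidableEq (IkType k ⊕ Fin (2 ^ k) ⊕ Fin (2 ^ k) ⊕ IkType k))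

instance ikFintype : ∀ k, Fintype (IkType k)
  | 0 => inferInstanceAs (Fintype PUnit)
  | k + 1 =>
    letI := ikFintype k
    inferInstanceAs (Fintype (IkType k ⊕ Fin (2 ^ k) ⊕ Fin (2 ^ k) ⊕ IkType k))

/-- The strict order relation of `I_{k+1}` on `IkType k`: relations inside the
left copy `L` and the right copy `R` are inherited recursively; every element of
`L ∪ A_L` is below every element of `R`; every element of `L` is below every
element of `A_R ∪ R`; and nothing else. -/
def IkLT : (k : ℕ) → IkType k → IkType k → Prop
  | 0, _, _ => False
  | k + 1, x, y =>
    match x, y with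
    | Sum.inl a, Sum.inl b => IkLT k a b
    | Sum.inl _, Sum.inr (Sum.inr _) => True
    | Sum.inr (Sum.inl _), Sum.inr (Sum.inr (Sum.inr _)) => True
    | Sum.inr (Sum.inr (Sum.inr a)), Sum.inr (Sum.inr (Sum.inr b)) => IkLT k a b
    | _, _ => False

theorem ikLT_irrefl : ∀ (k : ℕ) (x : IkType k), ¬ IkLT k x x := by
  intro k
  induction k with
  | zero => intro x h; exact h
  | succ k ih =>
    intro x
    rcases x with a | (a | (a | a)) <;> simp [IkLT] <;> exact ih a

theorem ikLT_trans :
    ∀ (k : ℕ) (x y z : IkType k), IkLT k x y → IkLT k y z → IkLT k x z := by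
  intro k
  induction k with
  | zero => intro x y z h1 _; exact h1.elim
  | succ k ih =>
    intro x y z h1 h2
    rcases x with a | (a | (a | a)) <;> rcases y with b | (b | (b | b)) <;>
      rcases z with c | (c | (c | c)) <;> simp_all [IkLT]
    · exact ih a b c h1 h2
    · exact ih a b c h1 h2

/-- The interval order `I_{k+1}` (on `(k+1)·2^k` elements). -/
def IkOrder (k : ℕ) : PartialOrder (IkType k) where
  le x y := IkLT k x y ∨ x = y
  le_refl x := Or.inr rfl
  le_trans x y z h1 h2 := by
    rcases h1 with h1 | rfl
    · rcases h2 with h2 | rfl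
      · exact Or.inl (ikLT_trans k x y z h1 h2)
      · exact Or.inl h1
    · exact h2
  le_antisymm x y h1 h2 := by
    rcases h1 with h1 | rfl
    · rcases h2 with h2 | rfl
      · exact absurd (ikLT_trans k x y x h1 h2) (ikLT_irrefl k x)
      · rfl
    · rfl


section AuxSection
namespace IkAux


def phi : (k : ℕ) → IkType k → ℕ
  | 0, _ => 0
  | k+1, Sum.inl a => phi k a
  | k+1, Sum.inr (Sum.inl _) => k+1
  | k+1, Sum.inr (Sum.inr (Sum.inl _)) => k+1
  | k+1, Sum.inr (Sum.inr (Sum.inr a)) => phi k a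

def dpt : (k : ℕ) → IkType k → ℕ
  | 0, _ => 0
  | k+1, Sum.inl a => dpt k a + 1
  | k+1, Sum.inr (Sum.inl _) => 1
  | k+1, Sum.inr (Sum.inr (Sum.inl _)) => 1
  | k+1, Sum.inr (Sum.inr (Sum.inr a)) => dpt k a + 1

lemma sum_ikType {M : Type} [AddCommMonoid M] (k : ℕ) (f : IkType (k+1) → M) :
    ∑ v : IkType (k+1), f v
      = ∑ a : IkType k, f (Sum.inl a)
        + ((∑ i : Fin (2^k), f (Sum.inr (Sum.inl i)))
        + ((∑ i : Fin (2^k), f (Sum.inr (Sum.inr (Sum.inl i))))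
        + ∑ a : IkType k, f (Sum.inr (Sum.inr (Sum.inr a))))) := by
  exact (Fintype.sum_sum_type (α₁ := IkType k) (α₂ := Fin (2 ^ k) ⊕ Fin (2 ^ k) ⊕ IkType k) f).trans
    (congrArg _ ((Fintype.sum_sum_type _).trans (congrArg _ (Fintype.sum_sum_type _))))

lemma card_ikType : ∀ k, Fintype.card (IkType k) = (k+1) * 2^k
  | 0 => rfl
  | k+1 => by
    have h : Fintype.card (IkType (k+1))
        = Fintype.card (IkType k) + (2^k + (2^k + Fintype.card (IkType k))) := by
      show Fintype.card (IkType k ⊕ Fin (2^k) ⊕ Fin (2^k) ⊕ IkType k) = _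
      simp
    rw [h, card_ikType k]; ring

lemma sum_phi : ∀ k, 2 * ∑ v : IkType k, phi k v = k * (k+1) * 2^k
  | 0 => rfl
  | k+1 => by
    rw [sum_ikType k (phi (k+1))]
    have h1 : ∑ a : IkType k, phi (k+1) (Sum.inl a) = ∑ a : IkType k, phi k a := rfl
    have h4 : ∑ a : IkType k, phi (k+1) (Sum.inr (Sum.inr (Sum.inr a)))
        = ∑ a : IkType k, phi k a := rfl
    have h2 : ∑ _i : Fin (2^k), (k+1) = 2^k * (k+1) := by
      simp [Finset.sum_const, Finset.card_univ]
    rw [h1, h4]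
    have h3 : (∑ i : Fin (2^k), phi (k+1) (Sum.inr (Sum.inl i))) = 2^k * (k+1) := by
      simp [phi]
    have h5 : (∑ i : Fin (2^k), phi (k+1) (Sum.inr (Sum.inr (Sum.inl i)))) = 2^k * (k+1) := by
      simp [phi]
    rw [h3, h5]
    have ih := sum_phi k
    rw [pow_succ]
    zify at ih ⊢
    linear_combination 2 * ih

lemma sum_dpt : ∀ k, 2 * ∑ v : IkType k, dpt k v = k * (k+3) * 2^k
  | 0 => rfl
  | k+1 => by
    rw [sum_ikType k (dpt (k+1))]
    have h1 : ∑ a : IkType k, dpt (k+1) (Sum.inl a) = (∑ a : IkType k, dpt k a) + (k+1)*2^k := by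
      have : ∑ a : IkType k, dpt (k+1) (Sum.inl a) = ∑ a : IkType k, (dpt k a + 1) := rfl
      rw [this, Finset.sum_add_distrib]
      simp [Finset.card_univ, card_ikType k]
    have h4 : ∑ a : IkType k, dpt (k+1) (Sum.inr (Sum.inr (Sum.inr a)))
        = (∑ a : IkType k, dpt k a) + (k+1)*2^k := by
      have : ∑ a : IkType k, dpt (k+1) (Sum.inr (Sum.inr (Sum.inr a)))
          = ∑ a : IkType k, (dpt k a + 1) := rfl
      rw [this, Finset.sum_add_distrib]
      simp [Finset.card_univ, card_ikType k]
    have h3 : (∑ _i : Fin (2^k), 1) = 2^k := by simp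
    have h2 : (∑ i : Fin (2^k), dpt (k+1) (Sum.inr (Sum.inl i))) = 2^k := by simp [dpt]
    have h5 : (∑ i : Fin (2^k), dpt (k+1) (Sum.inr (Sum.inr (Sum.inl i)))) = 2^k := by
      simp [dpt]
    rw [h1, h4, h2, h5]
    have ih := sum_dpt k
    rw [pow_succ]
    zify at ih ⊢
    linear_combination 2 * ih



def IkAC (k : ℕ) (S : Finset (IkType k)) : Prop := ∀ v ∈ S, ∀ w ∈ S, ¬ IkLT k v w

section parts
variable {k : ℕ}

def partL (S : Finset (IkType (k+1))) : Finset (IkType k) :=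
  Finset.toLeft (α := IkType k) (β := Fin (2 ^ k) ⊕ Fin (2 ^ k) ⊕ IkType k) S

def partB (S : Finset (IkType (k+1))) : Finset (Fin (2^k)) :=
  (Finset.toRight (α := IkType k) (β := Fin (2 ^ k) ⊕ Fin (2 ^ k) ⊕ IkType k) S).toLeft

def partC (S : Finset (IkType (k+1))) : Finset (Fin (2^k)) :=
  ((Finset.toRight (α := IkType k) (β := Fin (2 ^ k) ⊕ Fin (2 ^ k) ⊕ IkType k) S).toRight).toLeft

def partR (S : Finset (IkType (k+1))) : Finset (IkType k) :=
  ((Finset.toRight (α := IkType k) (β := Fin (2 ^ k) ⊕ Fin (2 ^ k) ⊕ IkType k) S).toRight).toRight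

lemma mem_partL {S : Finset (IkType (k+1))} {a : IkType k} :
    a ∈ partL S ↔ (Sum.inl a : IkType (k+1)) ∈ S := by
  simp [partL, Finset.mem_toLeft]
  exact Finset.mem_toLeft

lemma mem_partB {S : Finset (IkType (k+1))} {i : Fin (2^k)} :
    i ∈ partB S ↔ (Sum.inr (Sum.inl i) : IkType (k+1)) ∈ S := by
  simp [partB, Finset.mem_toLeft, Finset.mem_toRight]
  exact Finset.mem_toRight

lemma mem_partC {S : Finset (IkType (k+1))} {i : Fin (2^k)} :
    i ∈ partC S ↔ (Sum.inr (Sum.inr (Sum.inl i)) : IkType (k+1)) ∈ S := by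
  simp [partC, Finset.mem_toLeft, Finset.mem_toRight]
  exact Finset.mem_toRight

lemma mem_partR {S : Finset (IkType (k+1))} {a : IkType k} :
    a ∈ partR S ↔ (Sum.inr (Sum.inr (Sum.inr a)) : IkType (k+1)) ∈ S := by
  simp [partR, Finset.mem_toRight]
  exact Finset.mem_toRight

lemma sum_toParts {α β : Type} {M : Type} [AddCommMonoid M] (T : Finset (α ⊕ β)) (g : α ⊕ β → M) :
    ∑ v ∈ T, g v = (∑ a ∈ T.toLeft, g (Sum.inl a)) + ∑ b ∈ T.toRight, g (Sum.inr b) := by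
  conv_lhs => rw [← Finset.toLeft_disjSum_toRight (u := T)]
  rw [Finset.sum_disjSum]

lemma card_decomp (S : Finset (IkType (k+1))) :
    S.card = (partL S).card + ((partB S).card + ((partC S).card + (partR S).card)) := by
  have e1 := Finset.card_toLeft_add_card_toRight
    (u := (S : Finset (IkType k ⊕ Fin (2 ^ k) ⊕ Fin (2 ^ k) ⊕ IkType k)))
  have e2 := Finset.card_toLeft_add_card_toRight
    (u := Finset.toRight (α := IkType k) (β := Fin (2 ^ k) ⊕ Fin (2 ^ k) ⊕ IkType k) S)
  have e3 := Finset.card_toLeft_add_card_toRight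
    (u := (Finset.toRight (α := IkType k) (β := Fin (2 ^ k) ⊕ Fin (2 ^ k) ⊕ IkType k) S).toRight)
  rw [partL, partB, partC, partR]
  have e0 : @Finset.card (IkType k ⊕ Fin (2 ^ k) ⊕ Fin (2 ^ k) ⊕ IkType k) S = @Finset.card (IkType (k+1)) S := rfl
  omega

lemma sum_decomp {M : Type} [AddCommMonoid M] (S : Finset (IkType (k+1))) (f : IkType (k+1) → M) :
    ∑ v ∈ S, f v = (∑ a ∈ partL S, f (Sum.inl a))
      + ((∑ i ∈ partB S, f (Sum.inr (Sum.inl i)))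
      + ((∑ i ∈ partC S, f (Sum.inr (Sum.inr (Sum.inl i))))
      + (∑ a ∈ partR S, f (Sum.inr (Sum.inr (Sum.inr a)))))) := by
  refine (sum_toParts (α := IkType k) (β := Fin (2 ^ k) ⊕ Fin (2 ^ k) ⊕ IkType k) S f).trans ?_
  rw [sum_toParts, sum_toParts]
  rfl

end parts

lemma ikAC_card_le : ∀ (k : ℕ) (S : Finset (IkType k)), IkAC k S → S.card ≤ 2^k
  | 0, S, _ => by
    have h := Finset.card_le_univ S
    have h1 : Fintype.card (IkType 0) = 1 := rfl
    omega
  | k+1, S, hS => by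
    rw [card_decomp S]
    by_cases hL : (partL S).Nonempty
    · obtain ⟨a, ha⟩ := hL
      have hC : partC S = ∅ := by
        rw [Finset.eq_empty_iff_forall_notMem]
        intro c hc
        exact hS _ (mem_partL.mp ha) _ (mem_partC.mp hc) trivial
      have hR : partR S = ∅ := by
        rw [Finset.eq_empty_iff_forall_notMem]
        intro c hc
        exact hS _ (mem_partL.mp ha) _ (mem_partR.mp hc) trivial
      have h1 : (partL S).card ≤ 2^k := by
        apply ikAC_card_le k _ (fun v hv w hw hlt => ?_)
        exact hS _ (mem_partL.mp hv) _ (mem_partL.mp hw) hlt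
      have h2 : (partB S).card ≤ 2^k := by
        have := Finset.card_le_univ (partB S)
        simpa using this
      rw [hC, hR]
      simp only [Finset.card_empty]
      have : (2:ℕ)^(k+1) = 2^k + 2^k := by ring
      omega
    · have hLe : (partL S).card = 0 := by
        rw [Finset.not_nonempty_iff_eq_empty] at hL; simp [hL]
      by_cases hR : (partR S).Nonempty
      · obtain ⟨a, ha⟩ := hR
        have hB : partB S = ∅ := by
          rw [Finset.eq_empty_iff_forall_notMem]
          intro c hc
          exact hS _ (mem_partB.mp hc) _ (mem_partR.mp ha) trivial
        have h1 : (partR S).card ≤ 2^k := by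
          apply ikAC_card_le k _ (fun v hv w hw hlt => ?_)
          exact hS _ (mem_partR.mp hv) _ (mem_partR.mp hw) hlt
        have h2 : (partC S).card ≤ 2^k := by
          have := Finset.card_le_univ (partC S)
          simpa using this
        rw [hB]
        simp only [Finset.card_empty]
        have : (2:ℕ)^(k+1) = 2^k + 2^k := by ring
        omega
      · have hRe : (partR S).card = 0 := by
          rw [Finset.not_nonempty_iff_eq_empty] at hR; simp [hR]
        have h2 : (partB S).card ≤ 2^k := by
          have := Finset.card_le_univ (partB S); simpa using this
        have h3 : (partC S).card ≤ 2^k := by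
          have := Finset.card_le_univ (partC S); simpa using this
        have : (2:ℕ)^(k+1) = 2^k + 2^k := by ring
        omega

open Real in
lemma logbE_pos : 0 < Real.logb 2 (Real.exp 1) := by
  rw [Real.logb, Real.log_exp]
  have h2 : 0 < Real.log 2 := Real.log_pos (by norm_num)
  positivity

open Real in
lemma key_ineq {a b M : ℝ} (ha : 1 ≤ a) (hb : 1 ≤ b) (haM : a ≤ M) (hbM : b ≤ M) :
    (a + b) * Real.logb 2 (a + b)
      ≤ a * Real.logb 2 a + b * Real.logb 2 (2 * M) + Real.logb 2 (Real.exp 1) * b := by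
  have ha0 : (0:ℝ) < a := by linarith
  have hb0 : (0:ℝ) < b := by linarith
  have hM : (0:ℝ) < M := by linarith
  have hlog2 : (0:ℝ) < Real.log 2 := Real.log_pos (by norm_num)
  have h1 : Real.log (a + b) ≤ Real.log a + b / a := by
    have hd : Real.log (a + b) - Real.log a = Real.log ((a + b) / a) := by
      rw [Real.log_div (by positivity) (ne_of_gt ha0)]
    have h := Real.log_le_sub_one_of_pos (x := (a + b) / a) (by positivity)
    have he : (a + b) / a - 1 = b / a := by field_simp; ring
    rw [he] at h
    linarith [hd ▸ h]
  have h2 : Real.logb 2 (a + b) ≤ Real.logb 2 a + (b / a) * Real.logb 2 (Real.exp 1) := by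
    rw [Real.logb, Real.logb, Real.logb, Real.log_exp]
    have hstep : Real.log (a+b) / Real.log 2 ≤ (Real.log a + b / a) / Real.log 2 := by
      gcongr
    calc Real.log (a+b) / Real.log 2 ≤ (Real.log a + b / a) / Real.log 2 := hstep
      _ = Real.log a / Real.log 2 + (b / a) * (1 / Real.log 2) := by ring
  have h3 : Real.logb 2 (a + b) ≤ Real.logb 2 (2 * M) := by
    apply Real.logb_le_logb_of_le (by norm_num) (by positivity)
    linarith
  have step1 : a * Real.logb 2 (a + b) ≤ a * Real.logb 2 a + b * Real.logb 2 (Real.exp 1) := by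
    have := mul_le_mul_of_nonneg_left h2 ha0.le
    calc a * Real.logb 2 (a + b)
        ≤ a * (Real.logb 2 a + (b / a) * Real.logb 2 (Real.exp 1)) := this
      _ = a * Real.logb 2 a + b * Real.logb 2 (Real.exp 1) := by field_simp
  have step2 : b * Real.logb 2 (a + b) ≤ b * Real.logb 2 (2 * M) :=
    mul_le_mul_of_nonneg_left h3 hb0.le
  nlinarith [step1, step2]

open Real in
lemma claimA : ∀ (k : ℕ) (S : Finset (IkType k)), IkAC k S →
    (S.card : ℝ) * Real.logb 2 (S.card)
      ≤ (∑ v ∈ S, (phi k v : ℝ)) + Real.logb 2 (Real.exp 1) * S.card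
  | 0, S, _ => by
    have h := Finset.card_le_univ S
    have h1 : Fintype.card (IkType 0) = 1 := rfl
    have hphi : (0:ℝ) ≤ ∑ v ∈ S, (phi 0 v : ℝ) :=
      Finset.sum_nonneg (fun v _ => by positivity)
    have hc : (0:ℝ) ≤ Real.logb 2 (Real.exp 1) * S.card := by
      have := logbE_pos
      positivity
    have h0 : S.card = 0 ∨ S.card = 1 := by omega
    have hE := logbE_pos
    rcases h0 with h0 | h0 <;> rw [h0] <;> norm_num <;> linarith [hphi, hE]
  | (k+1), S, hS => by
    have hcard := card_decomp S
    have hsum := sum_decomp S (fun v => (phi (k+1) v : ℝ))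
    have hBcast : ∀ T : Finset (Fin (2^k)),
        (∑ i ∈ T, ((phi (k+1) (Sum.inr (Sum.inl i)) : ℕ) : ℝ)) = T.card * ((k:ℝ)+1) := by
      intro T
      have : ∀ i : Fin (2^k), ((phi (k+1) (Sum.inr (Sum.inl i)) : ℕ) : ℝ) = ((k:ℝ)+1) := by
        intro i; norm_num [phi]
      rw [Finset.sum_congr rfl (fun i _ => this i), Finset.sum_const, nsmul_eq_mul]
    have hCcast : ∀ T : Finset (Fin (2^k)),
        (∑ i ∈ T, ((phi (k+1) (Sum.inr (Sum.inr (Sum.inl i))) : ℕ) : ℝ)) = T.card * ((k:ℝ)+1) := by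
      intro T
      have : ∀ i : Fin (2^k), ((phi (k+1) (Sum.inr (Sum.inr (Sum.inl i))) : ℕ) : ℝ) = ((k:ℝ)+1) := by
        intro i; norm_num [phi]
      rw [Finset.sum_congr rfl (fun i _ => this i), Finset.sum_const, nsmul_eq_mul]
    have hlogE := logbE_pos
    by_cases hL : (partL S).Nonempty
    · obtain ⟨a0, ha0⟩ := hL
      have hC : partC S = ∅ := by
        rw [Finset.eq_empty_iff_forall_notMem]
        intro c hc
        exact hS _ (mem_partL.mp ha0) _ (mem_partC.mp hc) trivial
      have hR : partR S = ∅ := by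
        rw [Finset.eq_empty_iff_forall_notMem]
        intro c hc
        exact hS _ (mem_partL.mp ha0) _ (mem_partR.mp hc) trivial
      have hACL : IkAC k (partL S) := fun v hv w hw hlt =>
        hS _ (mem_partL.mp hv) _ (mem_partL.mp hw) hlt
      have IH := claimA k (partL S) hACL
      rw [hC, hR] at hcard hsum
      simp only [Finset.card_empty, Finset.sum_empty, add_zero] at hcard hsum
      have hphiL : (∑ x ∈ partL S, ((phi (k+1) (Sum.inl x) : ℕ) : ℝ))
          = ∑ x ∈ partL S, ((phi k x : ℕ) : ℝ) := rfl
      rw [hphiL, hBcast] at hsum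
      by_cases hb : (partB S).card = 0
      · rw [hb] at hcard
        rw [hb] at hsum
        simp only [Nat.cast_zero, zero_mul, add_zero] at hsum
        rw [hcard, hsum]
        exact IH
      · have ha1 : 1 ≤ (partL S).card := Finset.card_pos.mpr ⟨a0, ha0⟩
        have hb1 : 1 ≤ (partB S).card := by omega
        have haM : (partL S).card ≤ 2^k := ikAC_card_le k _ hACL
        have hbM : (partB S).card ≤ 2^k := by
          have := Finset.card_le_univ (partB S); simpa using this
        have key := key_ineq (a := ((partL S).card : ℝ)) (b := ((partB S).card : ℝ))
          (M := (2^k : ℝ)) (by exact_mod_cast ha1) (by exact_mod_cast hb1)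
          (by exact_mod_cast haM) (by exact_mod_cast hbM)
        have hpow : (2:ℝ) * 2^k = 2^(k+1) := by ring
        have hlogpow : Real.logb 2 ((2:ℝ)^(k+1)) = (k:ℝ)+1 := by
          rw [Real.logb_pow, Real.logb_self_eq_one (by norm_num)]
          push_cast; ring
        rw [hpow, hlogpow] at key
        rw [hcard, hsum]
        push_cast
        push_cast at key IH
        nlinarith [key, IH]
    · have hLe : partL S = ∅ := Finset.not_nonempty_iff_eq_empty.mp hL
      by_cases hRne : (partR S).Nonempty
      · obtain ⟨a0, ha0⟩ := hRne
        have hB : partB S = ∅ := by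
          rw [Finset.eq_empty_iff_forall_notMem]
          intro c hc
          exact hS _ (mem_partB.mp hc) _ (mem_partR.mp ha0) trivial
        have hACR : IkAC k (partR S) := fun v hv w hw hlt =>
          hS _ (mem_partR.mp hv) _ (mem_partR.mp hw) hlt
        have IH := claimA k (partR S) hACR
        rw [hLe, hB] at hcard hsum
        simp only [Finset.card_empty, Finset.sum_empty, add_zero, zero_add] at hcard hsum
        have hphiR : (∑ x ∈ partR S, ((phi (k+1) (Sum.inr (Sum.inr (Sum.inr x))) : ℕ) : ℝ))
            = ∑ x ∈ partR S, ((phi k x : ℕ) : ℝ) := rfl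
        rw [hphiR, hCcast] at hsum
        by_cases hb : (partC S).card = 0
        · rw [hb] at hcard
          rw [hb] at hsum
          simp only [Nat.cast_zero, zero_mul, zero_add] at hsum
          rw [hcard, hsum]
          simpa using IH
        · have ha1 : 1 ≤ (partR S).card := Finset.card_pos.mpr ⟨a0, ha0⟩
          have hb1 : 1 ≤ (partC S).card := by omega
          have haM : (partR S).card ≤ 2^k := ikAC_card_le k _ hACR
          have hbM : (partC S).card ≤ 2^k := by
            have := Finset.card_le_univ (partC S); simpa using this
          have key := key_ineq (a := ((partR S).card : ℝ)) (b := ((partC S).card : ℝ))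
            (M := (2^k : ℝ)) (by exact_mod_cast ha1) (by exact_mod_cast hb1)
            (by exact_mod_cast haM) (by exact_mod_cast hbM)
          have hpow : (2:ℝ) * 2^k = 2^(k+1) := by ring
          have hlogpow : Real.logb 2 ((2:ℝ)^(k+1)) = (k:ℝ)+1 := by
            rw [Real.logb_pow, Real.logb_self_eq_one (by norm_num)]
            push_cast; ring
          rw [hpow, hlogpow] at key
          rw [hcard, hsum]
          push_cast
          push_cast at key IH
          have hcomm : (((partC S).card :ℝ) + ((partR S).card:ℝ))
              = (((partR S).card:ℝ) + ((partC S).card:ℝ)) := by ring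
          rw [hcomm]
          nlinarith [key, IH]
      · have hRe : partR S = ∅ := Finset.not_nonempty_iff_eq_empty.mp hRne
        rw [hLe, hRe] at hcard hsum
        simp only [Finset.card_empty, Finset.sum_empty, add_zero, zero_add] at hcard hsum
        rw [hBcast, hCcast] at hsum
        have hbM : (partB S).card ≤ 2^k := by
          have := Finset.card_le_univ (partB S); simpa using this
        have hcM : (partC S).card ≤ 2^k := by
          have := Finset.card_le_univ (partC S); simpa using this
        rw [hcard, hsum]
        by_cases hN : (partB S).card + (partC S).card = 0
        · have hb0 : (partB S).card = 0 := by omega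
          have hc0 : (partC S).card = 0 := by omega
          rw [hb0, hc0]
          norm_num
        · have hN1 : 1 ≤ (partB S).card + (partC S).card := by omega
          have hlogN : Real.logb 2 (((partB S).card + (partC S).card : ℕ) : ℝ) ≤ (k:ℝ)+1 := by
            have hle : (((partB S).card + (partC S).card : ℕ) : ℝ) ≤ (2:ℝ)^(k+1) := by
              have : (partB S).card + (partC S).card ≤ 2^(k+1) := by
                have : (2:ℕ)^(k+1) = 2^k + 2^k := by ring
                omega
              exact_mod_cast this
            have := Real.logb_le_logb_of_le (b := 2)
              (x := (((partB S).card + (partC S).card : ℕ) : ℝ)) (by norm_num)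
              (by exact_mod_cast hN1) hle
            have hlogpow : Real.logb 2 ((2:ℝ)^(k+1)) = (k:ℝ)+1 := by
              rw [Real.logb_pow, Real.logb_self_eq_one (by norm_num)]
              push_cast; ring
            rw [hlogpow] at this
            exact this
          have hNpos : (0:ℝ) < (((partB S).card + (partC S).card : ℕ) : ℝ) := by
            exact_mod_cast hN1
          have hcN : (0:ℝ) ≤ Real.logb 2 (Real.exp 1)
              * (((partB S).card + (partC S).card : ℕ) : ℝ) := by positivity
          push_cast
          push_cast at hlogN hNpos hcN
          nlinarith [hlogN, hNpos, hcN]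

lemma stable_iff (k : ℕ) (S : Finset (IkType k)) :
    IsStableSet (compGraph (IkOrder k)) S ↔ IkAC k S := by
  constructor
  · intro h v hv w hw hlt
    by_cases hvw : v = w
    · exact ikLT_irrefl k v (hvw ▸ hlt)
    · exact h v hv w hw (And.intro hvw (Or.inl (Or.inl hlt)))
  · rintro h v hv w hw (⟨hvw, hcomp⟩ : v ≠ w ∧ ((IkOrder k).le v w ∨ (IkOrder k).le w v))
    rcases hcomp with (h1 | h1) | (h1 | h1)
    · exact h v hv w hw h1
    · exact hvw h1
    · exact h w hw v hv h1
    · exact hvw h1.symm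


section eqhelpers
variable {k : ℕ}

lemma eq_inl_inl {a b : IkType k} (h : (Sum.inl a : IkType (k+1)) = Sum.inl b) : a = b := by
  have h' : (Sum.inl a : IkType k ⊕ Fin (2 ^ k) ⊕ Fin (2 ^ k) ⊕ IkType k) = Sum.inl b := h
  exact Sum.inl.inj h'

lemma eq_B_B {i j : Fin (2^k)} (h : (Sum.inr (Sum.inl i) : IkType (k+1)) = Sum.inr (Sum.inl j)) :
    i = j := by
  have h' : (Sum.inr (Sum.inl i) : IkType k ⊕ Fin (2 ^ k) ⊕ Fin (2 ^ k) ⊕ IkType k)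
      = Sum.inr (Sum.inl j) := h
  exact Sum.inl.inj (Sum.inr.inj h')

lemma eq_C_C {i j : Fin (2^k)}
    (h : (Sum.inr (Sum.inr (Sum.inl i)) : IkType (k+1)) = Sum.inr (Sum.inr (Sum.inl j))) :
    i = j := by
  have h' : (Sum.inr (Sum.inr (Sum.inl i)) : IkType k ⊕ Fin (2 ^ k) ⊕ Fin (2 ^ k) ⊕ IkType k)
      = Sum.inr (Sum.inr (Sum.inl j)) := h
  exact Sum.inl.inj (Sum.inr.inj (Sum.inr.inj h'))

lemma eq_R_R {a b : IkType k}
    (h : (Sum.inr (Sum.inr (Sum.inr a)) : IkType (k+1)) = Sum.inr (Sum.inr (Sum.inr b))) :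
    a = b := by
  have h' : (Sum.inr (Sum.inr (Sum.inr a)) : IkType k ⊕ Fin (2 ^ k) ⊕ Fin (2 ^ k) ⊕ IkType k)
      = Sum.inr (Sum.inr (Sum.inr b)) := h
  exact Sum.inr.inj (Sum.inr.inj (Sum.inr.inj h'))

lemma ne_inl_B {a : IkType k} {i : Fin (2^k)}
    (h : (Sum.inl a : IkType (k+1)) = Sum.inr (Sum.inl i)) : False := by
  have h' : (Sum.inl a : IkType k ⊕ Fin (2 ^ k) ⊕ Fin (2 ^ k) ⊕ IkType k)
      = Sum.inr (Sum.inl i) := h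
  exact Sum.inl_ne_inr h'

lemma ne_inl_C {a : IkType k} {i : Fin (2^k)}
    (h : (Sum.inl a : IkType (k+1)) = Sum.inr (Sum.inr (Sum.inl i))) : False := by
  have h' : (Sum.inl a : IkType k ⊕ Fin (2 ^ k) ⊕ Fin (2 ^ k) ⊕ IkType k)
      = Sum.inr (Sum.inr (Sum.inl i)) := h
  exact Sum.inl_ne_inr h'

lemma ne_inl_R {a b : IkType k}
    (h : (Sum.inl a : IkType (k+1)) = Sum.inr (Sum.inr (Sum.inr b))) : False := by
  have h' : (Sum.inl a : IkType k ⊕ Fin (2 ^ k) ⊕ Fin (2 ^ k) ⊕ IkType k)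
      = Sum.inr (Sum.inr (Sum.inr b)) := h
  exact Sum.inl_ne_inr h'

lemma ne_B_C {i j : Fin (2^k)}
    (h : (Sum.inr (Sum.inl i) : IkType (k+1)) = Sum.inr (Sum.inr (Sum.inl j))) : False := by
  have h' : (Sum.inr (Sum.inl i) : IkType k ⊕ Fin (2 ^ k) ⊕ Fin (2 ^ k) ⊕ IkType k)
      = Sum.inr (Sum.inr (Sum.inl j)) := h
  exact Sum.inl_ne_inr (Sum.inr.inj h')

lemma ne_B_R {i : Fin (2^k)} {b : IkType k}
    (h : (Sum.inr (Sum.inl i) : IkType (k+1)) = Sum.inr (Sum.inr (Sum.inr b))) : False := by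
  have h' : (Sum.inr (Sum.inl i) : IkType k ⊕ Fin (2 ^ k) ⊕ Fin (2 ^ k) ⊕ IkType k)
      = Sum.inr (Sum.inr (Sum.inr b)) := h
  exact Sum.inl_ne_inr (Sum.inr.inj h')

lemma ne_C_R {i : Fin (2^k)} {b : IkType k}
    (h : (Sum.inr (Sum.inr (Sum.inl i)) : IkType (k+1)) = Sum.inr (Sum.inr (Sum.inr b))) :
    False := by
  have h' : (Sum.inr (Sum.inr (Sum.inl i)) : IkType k ⊕ Fin (2 ^ k) ⊕ Fin (2 ^ k) ⊕ IkType k)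
      = Sum.inr (Sum.inr (Sum.inr b)) := h
  exact Sum.inl_ne_inr (Sum.inr.inj (Sum.inr.inj h'))

end eqhelpers

/-- affine embedding of the left part -/
noncomputable def TL (k : ℕ) : (IkType k → ℝ) →ᵃ[ℝ] (IkType (k+1) → ℝ) where
  toFun z := fun v => match v with
    | Sum.inl a => z a
    | Sum.inr (Sum.inl _) => 1
    | Sum.inr (Sum.inr _) => 0
  linear := {
    toFun := fun z => fun v => match v with
      | Sum.inl a => z a
      | Sum.inr _ => 0
    map_add' := by intro y z; funext v; rcases v with a | (i | (i | a)) <;> (show (_:ℝ) = (_:ℝ) + (_:ℝ); simp)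
    map_smul' := by intro c z; funext v; rcases v with a | (i | (i | a)) <;> (show (_:ℝ) = (_:ℝ) * (_:ℝ); simp) }
  map_vadd' := by
    intro p v; funext u; rcases u with a | (i | (i | a)) <;>
      simp [vadd_eq_add, Pi.add_apply] <;> (show (_:ℝ) = (_:ℝ) + (_:ℝ); simp)

noncomputable def TR (k : ℕ) : (IkType k → ℝ) →ᵃ[ℝ] (IkType (k+1) → ℝ) where
  toFun z := fun v => match v with
    | Sum.inl _ => 0
    | Sum.inr (Sum.inl _) => 0
    | Sum.inr (Sum.inr (Sum.inl _)) => 1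
    | Sum.inr (Sum.inr (Sum.inr a)) => z a
  linear := {
    toFun := fun z => fun v => match v with
      | Sum.inr (Sum.inr (Sum.inr a)) => z a
      | _ => 0
    map_add' := by intro y z; funext v; rcases v with a | (i | (i | a)) <;> (show (_:ℝ) = (_:ℝ) + (_:ℝ); simp)
    map_smul' := by intro c z; funext v; rcases v with a | (i | (i | a)) <;> (show (_:ℝ) = (_:ℝ) * (_:ℝ); simp) }
  map_vadd' := by
    intro p v; funext u; rcases u with a | (i | (i | a)) <;>
      simp [vadd_eq_add, Pi.add_apply] <;> (show (_:ℝ) = (_:ℝ) + (_:ℝ); simp)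

lemma TL_mem (k : ℕ) {z : IkType k → ℝ} (hz : z ∈ STAB (compGraph (IkOrder k))) :
    TL k z ∈ STAB (compGraph (IkOrder (k+1))) := by
  have himg : TL k z ∈ (TL k) '' (STAB (compGraph (IkOrder k))) := ⟨z, hz, rfl⟩
  rw [STAB, AffineMap.image_convexHull] at himg
  refine convexHull_mono ?_ himg
  rintro _ ⟨_, ⟨Sf, hSf, rfl⟩, rfl⟩
  refine ⟨(Sf.map ⟨fun a => (Sum.inl a : IkType (k+1)), fun a b h => eq_inl_inl h⟩) ∪
    ((Finset.univ : Finset (Fin (2^k))).map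
      ⟨fun i => (Sum.inr (Sum.inl i) : IkType (k+1)), fun i j h => eq_B_B h⟩), ?_, ?_⟩
  · rw [stable_iff]
    intro v hv w hw hlt
    rcases Finset.mem_union.mp hv with hv | hv <;> rcases Finset.mem_union.mp hw with hw | hw <;>
      obtain ⟨a1, ha1, rfl⟩ := Finset.mem_map.mp hv <;>
      obtain ⟨b1, hb1, rfl⟩ := Finset.mem_map.mp hw
    · exact (stable_iff k Sf).mp hSf a1 ha1 b1 hb1 hlt
    · exact hlt
    · exact hlt
    · exact hlt
  · funext v
    rcases v with a | (i | (i | a))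
    · show (if a ∈ Sf then (1:ℝ) else 0) = _
      by_cases hmem : a ∈ Sf
      · rw [if_pos hmem]; split
        · rfl
        · next hfalse =>
            exact absurd (Finset.mem_union_left _ (Finset.mem_map_of_mem _ hmem)) hfalse
      · rw [if_neg hmem]; split
        · next htrue =>
            exfalso
            rcases Finset.mem_union.mp htrue with hc | hc
            · obtain ⟨b, hb, hEq⟩ := Finset.mem_map.mp hc
              exact hmem ((eq_inl_inl hEq) ▸ hb)
            · obtain ⟨j, _, hEq⟩ := Finset.mem_map.mp hc
              exact ne_inl_B hEq.symm
        · rfl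
    · show (1:ℝ) = _
      split
      · rfl
      · next hfalse =>
          exact absurd (Finset.mem_union_right _ (Finset.mem_map_of_mem _ (Finset.mem_univ i)))
            hfalse
    · show (0:ℝ) = _
      split
      · next htrue =>
          exfalso
          rcases Finset.mem_union.mp htrue with hc | hc
          · obtain ⟨b, _, hEq⟩ := Finset.mem_map.mp hc
            exact ne_inl_C hEq
          · obtain ⟨j, _, hEq⟩ := Finset.mem_map.mp hc
            exact ne_B_C hEq
      · rfl
    · show (0:ℝ) = _
      split
      · next htrue =>
          exfalso
          rcases Finset.mem_union.mp htrue with hc | hc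
          · obtain ⟨b, _, hEq⟩ := Finset.mem_map.mp hc
            exact ne_inl_R hEq
          · obtain ⟨j, _, hEq⟩ := Finset.mem_map.mp hc
            exact ne_B_R hEq
      · rfl

lemma TR_mem (k : ℕ) {z : IkType k → ℝ} (hz : z ∈ STAB (compGraph (IkOrder k))) :
    TR k z ∈ STAB (compGraph (IkOrder (k+1))) := by
  have himg : TR k z ∈ (TR k) '' (STAB (compGraph (IkOrder k))) := ⟨z, hz, rfl⟩
  rw [STAB, AffineMap.image_convexHull] at himg
  refine convexHull_mono ?_ himg
  rintro _ ⟨_, ⟨Sf, hSf, rfl⟩, rfl⟩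
  refine ⟨(Sf.map ⟨fun a => (Sum.inr (Sum.inr (Sum.inr a)) : IkType (k+1)),
      fun a b h => eq_R_R h⟩) ∪
    ((Finset.univ : Finset (Fin (2^k))).map
      ⟨fun i => (Sum.inr (Sum.inr (Sum.inl i)) : IkType (k+1)), fun i j h => eq_C_C h⟩), ?_, ?_⟩
  · rw [stable_iff]
    intro v hv w hw hlt
    rcases Finset.mem_union.mp hv with hv | hv <;> rcases Finset.mem_union.mp hw with hw | hw <;>
      obtain ⟨a1, ha1, rfl⟩ := Finset.mem_map.mp hv <;>
      obtain ⟨b1, hb1, rfl⟩ := Finset.mem_map.mp hw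
    · exact (stable_iff k Sf).mp hSf a1 ha1 b1 hb1 hlt
    · exact hlt
    · exact hlt
    · exact hlt
  · funext v
    rcases v with a | (i | (i | a))
    · show (0:ℝ) = _
      split
      · next htrue =>
          exfalso
          rcases Finset.mem_union.mp htrue with hc | hc
          · obtain ⟨b, _, hEq⟩ := Finset.mem_map.mp hc
            exact ne_inl_R hEq.symm
          · obtain ⟨j, _, hEq⟩ := Finset.mem_map.mp hc
            exact ne_inl_C hEq.symm
      · rfl
    · show (0:ℝ) = _
      split
      · next htrue =>
          exfalso
          rcases Finset.mem_union.mp htrue with hc | hc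
          · obtain ⟨b, _, hEq⟩ := Finset.mem_map.mp hc
            exact ne_B_R hEq.symm
          · obtain ⟨j, _, hEq⟩ := Finset.mem_map.mp hc
            exact ne_B_C hEq.symm
      · rfl
    · show (1:ℝ) = _
      split
      · rfl
      · next hfalse =>
          exact absurd (Finset.mem_union_right _ (Finset.mem_map_of_mem _ (Finset.mem_univ i)))
            hfalse
    · show (if a ∈ Sf then (1:ℝ) else 0) = _
      by_cases hmem : a ∈ Sf
      · rw [if_pos hmem]; split
        · rfl
        · next hfalse =>
            exact absurd (Finset.mem_union_left _ (Finset.mem_map_of_mem _ hmem)) hfalse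
      · rw [if_neg hmem]; split
        · next htrue =>
            exfalso
            rcases Finset.mem_union.mp htrue with hc | hc
            · obtain ⟨b, hb, hEq⟩ := Finset.mem_map.mp hc
              exact hmem ((eq_R_R hEq) ▸ hb)
            · obtain ⟨j, _, hEq⟩ := Finset.mem_map.mp hc
              exact ne_C_R hEq
        · rfl

noncomputable def xstar (k : ℕ) : IkType k → ℝ := fun v => (2:ℝ)⁻¹ ^ (dpt k v)

lemma xstar_mem : ∀ k, xstar k ∈ STAB (compGraph (IkOrder k))
  | 0 => by
    apply subset_convexHull
    refine ⟨Finset.univ, ?_, ?_⟩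
    · rintro v _ w _ ⟨hne, _⟩
      exact hne rfl
    · funext v; simp [xstar, dpt]
  | (k+1) => by
    have h1 := TL_mem k (xstar_mem k)
    have h2 := TR_mem k (xstar_mem k)
    have hcomb := (convex_convexHull ℝ _) h1 h2
      (by norm_num : (0:ℝ) ≤ 1/2) (by norm_num : (0:ℝ) ≤ 1/2) (by norm_num)
    have heq : xstar (k+1) = (1/2 : ℝ) • (TL k (xstar k)) + (1/2 : ℝ) • (TR k (xstar k)) := by
      funext v
      rcases v with a | (i | (i | a)) <;>
        simp [xstar, dpt, TL, TR, pow_succ] <;>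
        (show (_:ℝ) = (_:ℝ) * (_:ℝ) + (_:ℝ) * (_:ℝ); simp) <;> ring
    rw [STAB]
    rw [heq]
    exact hcomb

lemma stab_coord_le_one {V : Type*} [Fintype V] [DecidableEq V] {G : SimpleGraph V}
    {x : V → ℝ} (hx : x ∈ STAB G) (v : V) : x v ≤ 1 := by
  have hsub : STAB G ⊆ {y : V → ℝ | y v ≤ 1} := by
    apply convexHull_min
    · rintro y ⟨S, _, rfl⟩
      by_cases h : v ∈ S <;> simp [h]
    · intro y1 h1 y2 h2 a b ha hb hab
      simp only [Set.mem_setOf_eq] at h1 h2 ⊢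
      have : (a • y1 + b • y2) v = a * y1 v + b * y2 v := by
        simp [smul_eq_mul]
      rw [this]
      nlinarith
  exact hsub hx

lemma const_mem_stab {V : Type*} [Fintype V] [DecidableEq V] (G : SimpleGraph V)
    (hcard : 0 < Fintype.card V) :
    (fun _ : V => ((Fintype.card V : ℝ))⁻¹) ∈ STAB G := by
  classical
  have hmem := Finset.centerMass_mem_convexHull (t := (Finset.univ : Finset V))
      (w := fun _ => (1:ℝ))
      (fun _ _ => zero_le_one)
      (by
        rw [Finset.sum_const, nsmul_eq_mul, mul_one, Finset.card_univ]
        exact_mod_cast hcard)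
      (z := fun v => (fun u => if u ∈ ({v} : Finset V) then (1:ℝ) else 0))
      (s := {x | ∃ S : Finset V, IsStableSet G S ∧
        x = fun v => if v ∈ S then (1 : ℝ) else 0})
      (fun v _ => ⟨{v}, by
        rintro a ha b hb hadj
        rw [Finset.mem_singleton] at ha hb
        subst ha; subst hb
        exact G.loopless.irrefl _ hadj, rfl⟩)
  have heq : (Finset.univ : Finset V).centerMass (fun _ => (1:ℝ))
      (fun v => (fun u => if u ∈ ({v} : Finset V) then (1:ℝ) else 0))
      = fun _ : V => ((Fintype.card V : ℝ))⁻¹ := by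
    rw [Finset.centerMass]
    funext u
    rw [Finset.sum_const, nsmul_eq_mul, mul_one, Finset.card_univ]
    simp only [Pi.smul_apply, Finset.sum_apply, one_smul, smul_eq_mul]
    have : ∑ v : V, (if u ∈ ({v} : Finset V) then (1:ℝ) else 0) = 1 := by
      have h1 : ∀ v : V, (if u ∈ ({v} : Finset V) then (1:ℝ) else 0)
          = (if v = u then (1:ℝ) else 0) := by
        intro v
        simp [Finset.mem_singleton, eq_comm]
      rw [Finset.sum_congr rfl (fun v _ => h1 v), Finset.sum_ite_eq', if_pos (Finset.mem_univ u)]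
    rw [this, mul_one]
  rw [STAB, ← heq]
  exact hmem

open Real in
lemma Wside (k : ℕ) (W : PartialOrder (IkType k)) (hW : IsWeakOrder W)
    (hext : Extends W (IkOrder k)) (x : IkType k → ℝ)
    (hx : x ∈ STAB (compGraph W)) (hpos : ∀ v, 0 < x v) :
    Real.logb 2 ((Fintype.card (IkType k) : ℝ)) - (k:ℝ)/2 - Real.logb 2 (Real.exp 1)
      ≤ -(1 / (Fintype.card (IkType k) : ℝ)) * ∑ v, Real.logb 2 (x v) := by
  classical
  obtain ⟨m, A, hA1, hA2⟩ := hW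
  have hncard : Fintype.card (IkType k) = (k+1) * 2^k := card_ikType k
  have hNpos : (0:ℝ) < (Fintype.card (IkType k) : ℝ) := by
    rw [hncard]; positivity
  have hlog2 : (0:ℝ) < Real.log 2 := Real.log_pos (by norm_num)
  let lev : IkType k → Fin m := fun v => (hA1 v).choose
  have hchoose : ∀ v, v ∈ A (lev v) := fun v => (hA1 v).choose_spec.1
  have huniq : ∀ v i, v ∈ A i → i = lev v := fun v i h => (hA1 v).choose_spec.2 i h
  have hfiber : ∀ i, Finset.univ.filter (fun v => lev v = i) = A i := by
    intro i; ext v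
    simp only [Finset.mem_filter, Finset.mem_univ, true_and]
    constructor
    · rintro rfl; exact hchoose v
    · intro h; exact (huniq v i h).symm
  have hcardpos : ∀ v, 0 < ((A (lev v)).card : ℝ) := by
    intro v
    exact_mod_cast Finset.card_pos.mpr ⟨v, hchoose v⟩
  have hsame : ∀ S : Finset (IkType k), IsStableSet (compGraph W) S →
      ∀ v ∈ S, ∀ w ∈ S, lev v = lev w := by
    intro S hSt v hv w hw
    by_contra hne
    have hvw : v ≠ w := by rintro rfl; exact hne rfl
    rcases lt_trichotomy (lev v) (lev w) with h | h | h
    · have hlt : W.lt v w := (hA2 v w).mpr ⟨lev v, lev w, h, hchoose v, hchoose w⟩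
      exact hSt v hv w hw ⟨hvw, Or.inl ((W.lt_iff_le_not_ge v w).mp hlt).1⟩
    · exact hne h
    · have hlt : W.lt w v := (hA2 w v).mpr ⟨lev w, lev v, h, hchoose w, hchoose v⟩
      exact hSt v hv w hw ⟨hvw, Or.inr ((W.lt_iff_le_not_ge w v).mp hlt).1⟩
  have hsum1 : ∑ v, x v * ((A (lev v)).card : ℝ)⁻¹ ≤ 1 := by
    have hsubset : STAB (compGraph W) ⊆ {y | ∑ v, y v * ((A (lev v)).card : ℝ)⁻¹ ≤ 1} := by
      apply convexHull_min
      · rintro y ⟨S, hSt, rfl⟩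
        simp only [Set.mem_setOf_eq, ite_mul, one_mul, zero_mul]
        rw [Finset.sum_ite_mem, Finset.univ_inter]
        rcases S.eq_empty_or_nonempty with rfl | ⟨v0, hv0⟩
        · simp
        · have hcongr : ∀ v ∈ S, ((A (lev v)).card : ℝ)⁻¹ = ((A (lev v0)).card : ℝ)⁻¹ := by
            intro v hv; rw [hsame S hSt v hv v0 hv0]
          rw [Finset.sum_congr rfl hcongr, Finset.sum_const, nsmul_eq_mul]
          have hsub : S ⊆ A (lev v0) := by
            intro v hv
            have h2 := hchoose v
            rwa [hsame S hSt v hv v0 hv0] at h2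
          have hcard := Finset.card_le_card hsub
          have hpos0 : (0:ℝ) < ((A (lev v0)).card : ℝ) := hcardpos v0
          rw [← div_eq_mul_inv, div_le_one hpos0]
          exact_mod_cast hcard
      · intro y1 h1 y2 h2 a b ha hb hab
        simp only [Set.mem_setOf_eq] at h1 h2 ⊢
        have hexp : ∀ v, (a • y1 + b • y2) v * ((A (lev v)).card : ℝ)⁻¹
            = a * (y1 v * ((A (lev v)).card : ℝ)⁻¹)
              + b * (y2 v * ((A (lev v)).card : ℝ)⁻¹) := by
          intro v; simp only [Pi.add_apply, Pi.smul_apply, smul_eq_mul]; ring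
        rw [Finset.sum_congr rfl (fun v _ => hexp v), Finset.sum_add_distrib,
          ← Finset.mul_sum, ← Finset.mul_sum]
        nlinarith
    exact hsubset hx
  have hkey : ∑ v, Real.log (x v)
      ≤ (∑ v, Real.log ((A (lev v)).card : ℝ))
        - (Fintype.card (IkType k) : ℝ) * Real.log ((Fintype.card (IkType k) : ℝ)) := by
    have hpt : ∀ v : IkType k,
        Real.log ((Fintype.card (IkType k) : ℝ)) + Real.log (x v)
          - Real.log ((A (lev v)).card : ℝ)
        ≤ (Fintype.card (IkType k) : ℝ) * (x v * ((A (lev v)).card : ℝ)⁻¹) - 1 := by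
      intro v
      have hz : 0 < x v * ((A (lev v)).card : ℝ)⁻¹ :=
        mul_pos (hpos v) (inv_pos.mpr (hcardpos v))
      have h := Real.log_le_sub_one_of_pos (mul_pos hNpos hz)
      rw [Real.log_mul (ne_of_gt hNpos) (ne_of_gt hz),
        Real.log_mul (ne_of_gt (hpos v)) (ne_of_gt (inv_pos.mpr (hcardpos v))),
        Real.log_inv] at h
      linarith
    have hsumpt := Finset.sum_le_sum (fun v (_ : v ∈ Finset.univ) => hpt v)
    rw [Finset.sum_sub_distrib, Finset.sum_add_distrib, Finset.sum_const, Finset.card_univ,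
      nsmul_eq_mul] at hsumpt
    have hrhs : ∑ v : IkType k,
        ((Fintype.card (IkType k) : ℝ) * (x v * ((A (lev v)).card : ℝ)⁻¹) - 1)
        = (Fintype.card (IkType k) : ℝ) * (∑ v, x v * ((A (lev v)).card : ℝ)⁻¹)
          - (Fintype.card (IkType k) : ℝ) := by
      rw [Finset.sum_sub_distrib, ← Finset.mul_sum, Finset.sum_const, Finset.card_univ,
        nsmul_eq_mul, mul_one]
    rw [hrhs] at hsumpt
    nlinarith
  have hanti : ∀ i : Fin m, IkAC k (A i) := by
    intro i v hv w hw hlt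
    by_cases hvw : v = w
    · exact ikLT_irrefl k v (hvw ▸ hlt)
    · have hle : W.le v w := hext v w (Or.inl hlt)
      have hnle : ¬ W.le w v := fun hge => hvw (W.le_antisymm v w hle hge)
      have hWlt : W.lt v w := (W.lt_iff_le_not_ge v w).mpr ⟨hle, hnle⟩
      obtain ⟨i1, j1, hij, hvi, hwj⟩ := (hA2 v w).mp hWlt
      have e1 : i1 = lev v := huniq v i1 hvi
      have e2 : i = lev v := huniq v i hv
      have e3 : j1 = lev w := huniq w j1 hwj
      have e4 : i = lev w := huniq w i hw
      rw [e1, ← e2, e3, ← e4] at hij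
      exact lt_irrefl i hij
  have hclaim : ∀ i : Fin m, ((A i).card : ℝ) * Real.log ((A i).card)
      ≤ (∑ v ∈ A i, (phi k v : ℝ)) * Real.log 2 + (A i).card := by
    intro i
    have h := claimA k (A i) (hanti i)
    rw [Real.logb, Real.logb, Real.log_exp] at h
    have h2 := mul_le_mul_of_nonneg_right h hlog2.le
    calc ((A i).card : ℝ) * Real.log ((A i).card)
        = ((A i).card : ℝ) * (Real.log ((A i).card) / Real.log 2) * Real.log 2 := by
          field_simp
      _ ≤ ((∑ v ∈ A i, (phi k v : ℝ)) + 1 / Real.log 2 * (A i).card) * Real.log 2 := h2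
      _ = (∑ v ∈ A i, (phi k v : ℝ)) * Real.log 2 + (A i).card := by
          field_simp
  have hfib1 : ∑ v, Real.log ((A (lev v)).card : ℝ)
      = ∑ i, ((A i).card : ℝ) * Real.log ((A i).card) := by
    rw [← Finset.sum_fiberwise Finset.univ lev (fun v => Real.log ((A (lev v)).card : ℝ))]
    apply Finset.sum_congr rfl
    intro i _
    rw [Finset.sum_congr (hfiber i) (fun v hv => by rw [← huniq v i hv]),
      Finset.sum_const, nsmul_eq_mul]
  have hfib2 : ∑ v, (phi k v : ℝ) = ∑ i, ∑ v ∈ A i, (phi k v : ℝ) := by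
    rw [← Finset.sum_fiberwise Finset.univ lev (fun v => (phi k v : ℝ))]
    apply Finset.sum_congr rfl
    intro i _
    exact Finset.sum_congr (hfiber i) (fun _ _ => rfl)
  have hfib3 : ∑ i, ((A i).card : ℝ) = (Fintype.card (IkType k) : ℝ) := by
    have h := Finset.sum_fiberwise Finset.univ lev (fun _ => (1:ℝ))
    simp only [Finset.sum_const, nsmul_eq_mul, mul_one] at h
    calc ∑ i, ((A i).card : ℝ)
        = ∑ i, ((Finset.univ.filter (fun v => lev v = i)).card : ℝ) := by
          apply Finset.sum_congr rfl; intro i _; rw [hfiber i]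
      _ = ((Finset.univ : Finset (IkType k)).card : ℝ) := h
      _ = _ := by rw [Finset.card_univ]
  have hphiR : (2:ℝ) * ∑ v : IkType k, (phi k v : ℝ) = (k:ℝ) * ((k:ℝ)+1) * 2^k := by
    have h := sum_phi k
    have hcast : ((2 * ∑ v : IkType k, phi k v : ℕ) : ℝ) = ((k * (k+1) * 2^k : ℕ) : ℝ) := by
      exact_mod_cast congrArg Nat.cast h
    push_cast at hcast
    linarith
  have hPhi : ∑ v : IkType k, (phi k v : ℝ)
      = (k:ℝ) * (Fintype.card (IkType k) : ℝ) / 2 := by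
    rw [hncard]
    push_cast
    linarith
  have hsumclaim : ∑ i, ((A i).card : ℝ) * Real.log ((A i).card)
      ≤ (∑ v, (phi k v : ℝ)) * Real.log 2 + (Fintype.card (IkType k) : ℝ) := by
    calc ∑ i, ((A i).card : ℝ) * Real.log ((A i).card)
        ≤ ∑ i, ((∑ v ∈ A i, (phi k v : ℝ)) * Real.log 2 + ((A i).card : ℝ)) :=
          Finset.sum_le_sum (fun i _ => hclaim i)
      _ = (∑ i, ∑ v ∈ A i, (phi k v : ℝ)) * Real.log 2 + ∑ i, ((A i).card:ℝ) := by
          rw [Finset.sum_add_distrib, Finset.sum_mul]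
      _ = _ := by rw [← hfib2, hfib3]
  have htotal : ∑ v, Real.log (x v)
      ≤ Real.log 2 * ((k:ℝ) * (Fintype.card (IkType k) : ℝ) / 2)
        + (Fintype.card (IkType k) : ℝ)
        - (Fintype.card (IkType k) : ℝ) * Real.log ((Fintype.card (IkType k) : ℝ)) := by
    have h1 := hkey
    rw [hfib1] at h1
    have h2 := hsumclaim
    rw [hPhi] at h2
    nlinarith
  have hlogbsum : ∑ v, Real.logb 2 (x v) = (∑ v, Real.log (x v)) / Real.log 2 := by
    rw [Finset.sum_div]
    apply Finset.sum_congr rfl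
    intro v _
    rw [Real.logb]
  rw [hlogbsum]
  simp only [Real.logb, Real.log_exp]
  have hN0 : (Fintype.card (IkType k) : ℝ) ≠ 0 := ne_of_gt hNpos
  have hl0 : Real.log 2 ≠ 0 := ne_of_gt hlog2
  have e2 : Real.log ((Fintype.card (IkType k) : ℝ)) / Real.log 2 - (k:ℝ)/2 - 1/Real.log 2
      = -(Real.log 2 * ((k:ℝ) * (Fintype.card (IkType k) : ℝ) / 2)
          + (Fintype.card (IkType k) : ℝ)
          - (Fintype.card (IkType k) : ℝ) * Real.log ((Fintype.card (IkType k) : ℝ)))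
        / ((Fintype.card (IkType k) : ℝ) * Real.log 2) := by
    field_simp
    ring
  have e1 : -(1 / (Fintype.card (IkType k) : ℝ)) * ((∑ v, Real.log (x v)) / Real.log 2)
      = -(∑ v, Real.log (x v)) / ((Fintype.card (IkType k) : ℝ) * Real.log 2) := by
    field_simp
  rw [e2, e1]
  have hdenom : (0:ℝ) < (Fintype.card (IkType k) : ℝ) * Real.log 2 := mul_pos hNpos hlog2
  apply div_le_div_of_nonneg_right ?_ ?_
  case _ => linarith [htotal]
  case _ => exact hdenom.le

end IkAux
end AuxSection

/-- For every `k ≥ 1`, every weak order `W` extending the interval order `I_k`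
satisfies `H(W) - H(I_k) ≥ log₂ k - log₂ e - 1`. (Here `IkOrder k` is `I_{k+1}`,
so the bound reads `H(W) - H(I_{k+1}) ≥ log₂ (k+1) - log₂ e - 1`.) -/
theorem weakOrder_extension_Ik_entropy_gap (k : ℕ)
    (W : PartialOrder (IkType k)) (hW : IsWeakOrder W)
    (hext : Extends W (IkOrder k)) :
    Real.logb 2 ((k : ℝ) + 1) - Real.logb 2 (Real.exp 1) - 1 ≤
      posetEntropy W - posetEntropy (IkOrder k) := by
  classical
  have hncard : Fintype.card (IkType k) = (k+1) * 2^k := IkAux.card_ikType k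
  have hNpos : (0:ℝ) < (Fintype.card (IkType k) : ℝ) := by rw [hncard]; positivity
  have hcardpos : 0 < Fintype.card (IkType k) := by
    rw [hncard]; positivity
  -- lower bound for H(W)
  have hWlow : Real.logb 2 ((Fintype.card (IkType k) : ℝ)) - (k:ℝ)/2
      - Real.logb 2 (Real.exp 1) ≤ posetEntropy W := by
    unfold posetEntropy graphEntropy
    apply le_csInf
    · refine ⟨-(1 / (Fintype.card (IkType k) : ℝ))
        * ∑ _v : IkType k, Real.logb 2 (((Fintype.card (IkType k) : ℝ))⁻¹),
        fun _ : IkType k => ((Fintype.card (IkType k) : ℝ))⁻¹,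
        IkAux.const_mem_stab (compGraph W) hcardpos, fun v => by positivity, rfl⟩
    · rintro h ⟨x, hx, hpos, rfl⟩
      exact IkAux.Wside k W hW hext x hx hpos
  -- upper bound for H(I)
  have hIhigh : posetEntropy (IkOrder k)
      ≤ -(1 / (Fintype.card (IkType k) : ℝ))
        * ∑ v, Real.logb 2 (IkAux.xstar k v) := by
    unfold posetEntropy graphEntropy
    apply csInf_le
    · refine ⟨0, ?_⟩
      rintro h ⟨x, hx, hpos, rfl⟩
      have hle1 : ∀ v, x v ≤ 1 := fun v => IkAux.stab_coord_le_one hx v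
      have hsum : ∑ v, Real.logb 2 (x v) ≤ 0 :=
        Finset.sum_nonpos (fun v _ => Real.logb_nonpos (by norm_num) (hpos v).le (hle1 v))
      have h1N : (0:ℝ) ≤ 1 / (Fintype.card (IkType k):ℝ) := by positivity
      nlinarith
    · refine ⟨IkAux.xstar k, IkAux.xstar_mem k, fun v => ?_, rfl⟩
      unfold IkAux.xstar
      positivity
  -- value of the xstar point
  have hxval : -(1 / (Fintype.card (IkType k) : ℝ)) * ∑ v, Real.logb 2 (IkAux.xstar k v)
      = (∑ v : IkType k, (IkAux.dpt k v : ℝ)) / (Fintype.card (IkType k) : ℝ) := by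
    have hterm : ∀ v : IkType k, Real.logb 2 (IkAux.xstar k v) = -(IkAux.dpt k v : ℝ) := by
      intro v
      unfold IkAux.xstar
      rw [Real.logb_pow, Real.logb_inv, Real.logb_self_eq_one (by norm_num)]
      ring
    rw [Finset.sum_congr rfl (fun v _ => hterm v)]
    rw [Finset.sum_neg_distrib]
    field_simp
  rw [hxval] at hIhigh
  -- arithmetic
  have hdptR : (2:ℝ) * ∑ v : IkType k, (IkAux.dpt k v : ℝ) = (k:ℝ) * ((k:ℝ)+3) * 2^k := by
    have h := IkAux.sum_dpt k
    have hcast : ((2 * ∑ v : IkType k, IkAux.dpt k v : ℕ) : ℝ)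
        = ((k * (k+3) * 2^k : ℕ) : ℝ) := by exact_mod_cast congrArg Nat.cast h
    push_cast at hcast
    linarith
  have hlogN : Real.logb 2 ((Fintype.card (IkType k):ℝ)) = Real.logb 2 ((k:ℝ)+1) + k := by
    rw [hncard]
    push_cast
    rw [Real.logb_mul (by positivity) (by positivity), Real.logb_pow,
      Real.logb_self_eq_one (by norm_num)]
    ring
  have hDN : (∑ v : IkType k, (IkAux.dpt k v : ℝ)) / (Fintype.card (IkType k) : ℝ)
      ≤ (k:ℝ)/2 + 1 := by
    rw [div_le_iff₀ hNpos, hncard]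
    push_cast
    nlinarith [hdptR, pow_pos (show (0:ℝ) < 2 by norm_num) k]
  rw [hlogN] at hWlow
  linarith [hWlow, hIhigh, hDN]
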